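/- Let (X, ‖·‖) be a quasi-Banach space and T : X → X a (b,θ)-enriched contraction. Then T has a unique fixed point p, i.e., Fix(T) = {p}. -/

import Mathlib

set_option maxHeartbeats 1000000 in
/-- a (b,θ)-enriched contraction on a quasi-Banach space has a unique
fixed point. -/
theorem stmt_6 {X : Type*} [AddCommGroup X] [Module ℝ X] (Nm : X → ℝ) (C : ℝ)
    (hC : 1 ≤ C)
    (hnn : ∀ x, 0 ≤ Nm x)
    (h0 : ∀ x, Nm x = 0 ↔ x = 0)
    (h1 : ∀ (r : ℝ) (x : X), Nm (r • x) = |r| * Nm x)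
    (h2 : ∀ x y, Nm (x + y) ≤ C * (Nm x + Nm y))
    (hcomplete : ∀ u : ℕ → X,
      (∀ ε > 0, ∃ N : ℕ, ∀ m ≥ N, ∀ n ≥ N, Nm (u m - u n) < ε) →
      ∃ l : X, Filter.Tendsto (fun n => Nm (u n - l)) Filter.atTop (nhds 0))
    (T : X → X) (b θ : ℝ) (hb : 0 ≤ b) (hθ0 : 0 ≤ θ) (hθ : θ < b + 1)
    (hT : ∀ x y, Nm (b • (x - y) + (T x - T y)) ≤ θ * Nm (x - y)) :
    ∃! p : X, T p = p := by
  have hC0 : (0:ℝ) < C := lt_of_lt_of_le one_pos hC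
  have hb1 : (0:ℝ) < b + 1 := by linarith
  have hsymm : ∀ x y : X, Nm (x - y) = Nm (y - x) := by
    intro x y
    have h := h1 (-1) (y - x)
    rw [neg_smul, one_smul, neg_sub] at h
    simpa using h
  have hNm0 : Nm (0 : X) = 0 := (h0 0).mpr rfl
  obtain ⟨k, hkdef⟩ : ∃ k : ℝ, k = max (θ / (b + 1)) (1/2) := ⟨_, rfl⟩
  have hk0 : (0:ℝ) < k := by
    rw [hkdef]; exact lt_of_lt_of_le (by norm_num) (le_max_right _ _)
  have hk1 : k < 1 := by
    rw [hkdef]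
    apply max_lt _ (by norm_num)
    rw [div_lt_one hb1]; linarith
  have hkθ : θ / (b + 1) ≤ k := by rw [hkdef]; exact le_max_left _ _
  obtain ⟨S, hSdef⟩ : ∃ S : X → X, S = fun x => (b + 1)⁻¹ • (b • x + T x) := ⟨_, rfl⟩
  have hcontr : ∀ x y, Nm (S x - S y) ≤ k * Nm (x - y) := by
    intro x y
    have e : S x - S y = (b + 1)⁻¹ • (b • (x - y) + (T x - T y)) := by
      simp only [hSdef]
      rw [← smul_sub, smul_sub b]
      congr 1
      abel
    rw [e, h1, abs_of_pos (inv_pos.mpr hb1)]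
    have h3 := hT x y
    have h4 : (b+1)⁻¹ * Nm (b • (x - y) + (T x - T y)) ≤ (b+1)⁻¹ * (θ * Nm (x - y)) :=
      mul_le_mul_of_nonneg_left h3 (inv_pos.mpr hb1).le
    have h5 : (b+1)⁻¹ * (θ * Nm (x-y)) = (θ/(b+1)) * Nm (x-y) := by ring
    have h6 : (θ/(b+1)) * Nm (x-y) ≤ k * Nm (x-y) :=
      mul_le_mul_of_nonneg_right hkθ (hnn _)
    linarith
  have hfix : ∀ p : X, S p = p ↔ T p = p := by
    intro p
    constructor
    · intro h
      have h' : (b+1) • S p = (b+1) • p := by rw [h]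
      simp only [hSdef, smul_smul, mul_inv_cancel₀ (ne_of_gt hb1), one_smul] at h'
      have h'' : (b+1) • p = b • p + p := by rw [add_smul, one_smul]
      rw [h''] at h'
      exact add_left_cancel h'
    · intro h
      simp only [hSdef]
      rw [h, show b • p + p = (b+1) • p by rw [add_smul, one_smul], smul_smul,
        inv_mul_cancel₀ (ne_of_gt hb1), one_smul]
  obtain ⟨u, hudef⟩ : ∃ u : ℕ → X, u = fun n => S^[n] 0 := ⟨_, rfl⟩
  have hu_succ : ∀ n, u (n + 1) = S (u n) := by
    intro n
    simp only [hudef]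
    exact Function.iterate_succ_apply' S n 0
  obtain ⟨d0, hd0def⟩ : ∃ d0 : ℝ, d0 = Nm (u 0 - u 1) := ⟨_, rfl⟩
  have hd00 : 0 ≤ d0 := by rw [hd0def]; exact hnn _
  have hdn : ∀ n, Nm (u n - u (n + 1)) ≤ k ^ n * d0 := by
    intro n
    induction n with
    | zero => simp [hd0def]
    | succ n ih =>
      calc Nm (u (n+1) - u (n+1+1)) = Nm (S (u n) - S (u (n+1))) := by
            rw [hu_succ (n+1), hu_succ n]
        _ ≤ k * Nm (u n - u (n+1)) := hcontr _ _
        _ ≤ k * (k ^ n * d0) := mul_le_mul_of_nonneg_left ih hk0.le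
        _ = k ^ (n+1) * d0 := by ring
  have h2' : ∀ (x y z : X), Nm (x - z) ≤ C * (Nm (x - y) + Nm (y - z)) := by
    intro x y z
    have := h2 (x - y) (y - z)
    rwa [sub_add_sub_cancel] at this
  -- Claim A : blocks of length ≤ 2^s
  have claimA : ∀ s n m, m ≤ 2 ^ s → Nm (u n - u (n + m)) ≤ (2*C) ^ s * k ^ n * d0 := by
    intro s
    induction s with
    | zero =>
      intro n m hm
      have hm1 : m ≤ 1 := by simpa using hm
      interval_cases m
      · have : (0:ℝ) ≤ (2*C)^0 * k ^ n * d0 := by positivity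
        simpa [hNm0] using this
      · simpa using hdn n
    | succ s ih =>
      intro n m hm
      have hpos : (0:ℝ) ≤ (2*C) ^ s := by positivity
      have hkn : (0:ℝ) ≤ k ^ n := by positivity
      by_cases h : m ≤ 2 ^ s
      · have hih := ih n m h
        have h7 : (2*C) ^ s ≤ (2*C) ^ (s+1) := by
          calc (2*C)^s = 1 * (2*C)^s := (one_mul _).symm
            _ ≤ (2*C) * (2*C)^s := by nlinarith
            _ = (2*C)^(s+1) := by ring
        linarith [mul_le_mul_of_nonneg_right h7 (mul_nonneg hkn hd00), hih]
      · push_neg at h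
        have hm2 : m - 2 ^ s ≤ 2 ^ s := by
          have hp : (2:ℕ) ^ (s+1) = 2 * 2 ^ s := by ring
          omega
        have hsum : n + 2 ^ s + (m - 2 ^ s) = n + m := by omega
        have key := h2' (u n) (u (n + 2 ^ s)) (u (n + m))
        have hA := ih n (2 ^ s) le_rfl
        have hB := ih (n + 2 ^ s) (m - 2 ^ s) hm2
        rw [hsum] at hB
        have hk' : k ^ (n + 2 ^ s) ≤ k ^ n :=
          pow_le_pow_of_le_one hk0.le hk1.le (by omega)
        have hB' : Nm (u (n + 2^s) - u (n+m)) ≤ (2*C)^s * k^n * d0 := by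
          linarith [mul_le_mul_of_nonneg_right
            (mul_le_mul_of_nonneg_left hk' hpos) hd00, hB]
        calc Nm (u n - u (n+m))
            ≤ C * (Nm (u n - u (n + 2^s)) + Nm (u (n+2^s) - u (n+m))) := key
          _ ≤ C * ((2*C)^s * k^n * d0 + (2*C)^s * k^n * d0) :=
              mul_le_mul_of_nonneg_left (add_le_add hA hB') hC0.le
          _ = (2*C)^(s+1) * k^n * d0 := by ring
  -- Claim B : dyadic tail estimate
  have claimB : ∀ t ℓ n m, m + 2 ^ ℓ ≤ 2 ^ (ℓ + t + 1) →
      Nm (u n - u (n + m)) ≤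
        (∑ j ∈ Finset.range (t+1), C^(j+1) * (2*C)^(ℓ+j) * k^(2^(ℓ+j) - 2^ℓ)) * k ^ n * d0 := by
    intro t
    induction t with
    | zero =>
      intro ℓ n m hm
      have hm' : m ≤ 2 ^ ℓ := by
        have hp : (2:ℕ) ^ (ℓ + 0 + 1) = 2 * 2 ^ ℓ := by ring
        omega
      have hA := claimA ℓ n m hm'
      have hs : (∑ j ∈ Finset.range 1, C^(j+1) * (2*C)^(ℓ+j) * k^(2^(ℓ+j) - 2^ℓ))
          = C * (2*C)^ℓ := by simp
      rw [hs]
      have hkn : (0:ℝ) ≤ k ^ n := by positivity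
      have hpos : (0:ℝ) ≤ (2*C) ^ ℓ := by positivity
      linarith [mul_le_mul_of_nonneg_right (mul_le_mul_of_nonneg_right
        (le_mul_of_one_le_left hpos hC) hkn) hd00, hA]
    | succ t ih =>
      intro ℓ n m hm
      have hkn : (0:ℝ) ≤ k ^ n := by positivity
      have hpos : (0:ℝ) ≤ (2*C) ^ ℓ := by positivity
      by_cases h : m ≤ 2 ^ ℓ
      · have hA := claimA ℓ n m h
        have hterm : ∀ j ∈ Finset.range (t+2),
            (0:ℝ) ≤ C^(j+1) * (2*C)^(ℓ+j) * k^(2^(ℓ+j) - 2^ℓ) := by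
          intro j _; positivity
        have h00 : C^(0+1) * (2*C)^(ℓ+0) * k^(2^(ℓ+0) - 2^ℓ) = C * (2*C)^ℓ := by simp
        have hge : C * (2*C)^ℓ ≤
            ∑ j ∈ Finset.range (t+2), C^(j+1)*(2*C)^(ℓ+j)*k^(2^(ℓ+j)-2^ℓ) := by
          rw [← h00]
          exact Finset.single_le_sum hterm (by simp)
        have hge2 : (2*C)^ℓ ≤
            ∑ j ∈ Finset.range (t+2), C^(j+1)*(2*C)^(ℓ+j)*k^(2^(ℓ+j)-2^ℓ) :=
          le_trans (le_mul_of_one_le_left hpos hC) hge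
        linarith [mul_le_mul_of_nonneg_right
          (mul_le_mul_of_nonneg_right hge2 hkn) hd00, hA]
      · push_neg at h
        have hp1 : (2:ℕ) ^ (ℓ+1) = 2 * 2 ^ ℓ := by ring
        have hm2 : (m - 2^ℓ) + 2^(ℓ+1) ≤ 2^(ℓ + 1 + t + 1) := by
          rw [show ℓ + 1 + t + 1 = ℓ + (t + 1) + 1 by omega]
          omega
        have hsum : n + 2^ℓ + (m - 2^ℓ) = n + m := by omega
        have key := h2' (u n) (u (n + 2^ℓ)) (u (n + m))
        have hA := claimA ℓ n (2^ℓ) le_rfl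
        have hB := ih (ℓ+1) (n + 2^ℓ) (m - 2^ℓ) hm2
        rw [hsum] at hB
        obtain ⟨SB, hSB⟩ : ∃ SB : ℝ, SB = ∑ j ∈ Finset.range (t+1),
            C^(j+1)*(2*C)^(ℓ+1+j)*k^(2^(ℓ+1+j)-2^(ℓ+1)) := ⟨_, rfl⟩
        rw [← hSB] at hB
        have hSB0 : 0 ≤ SB := by
          rw [hSB]
          apply Finset.sum_nonneg
          intro j _; positivity
        have hsum_eq : (∑ j ∈ Finset.range (t+2), C^(j+1)*(2*C)^(ℓ+j)*k^(2^(ℓ+j)-2^ℓ))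
            = C*(2*C)^ℓ + C * (SB * k^(2^ℓ)) := by
          rw [Finset.sum_range_succ']
          have h00 : C^(0+1) * (2*C)^(ℓ+0) * k^(2^(ℓ+0) - 2^ℓ) = C * (2*C)^ℓ := by simp
          rw [h00, hSB, Finset.sum_mul, Finset.mul_sum, add_comm]
          congr 1
          apply Finset.sum_congr rfl
          intro j _
          have hle : (2:ℕ)^(ℓ+1) ≤ 2^(ℓ+1+j) := Nat.pow_le_pow_right (by norm_num) (by omega)
          have hle2 : (2:ℕ)^ℓ ≤ 2^(ℓ+j) := Nat.pow_le_pow_right (by norm_num) (by omega)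
          have hexp : (2^(ℓ+1+j) - 2^(ℓ+1)) + 2^ℓ = 2^(ℓ+(j+1)) - 2^ℓ := by
            have e1 : (2:ℕ)^(ℓ+1+j) = 2 * 2^(ℓ+j) := by
              rw [show ℓ+1+j = (ℓ+j)+1 by omega]; ring
            have e2 : (2:ℕ)^(ℓ+(j+1)) = 2 * 2^(ℓ+j) := by
              rw [show ℓ+(j+1) = (ℓ+j)+1 by omega]; ring
            omega
          have hkk : k^(2^(ℓ+1+j)-2^(ℓ+1)) * k^(2^ℓ) = k^(2^(ℓ+(j+1)) - 2^ℓ) := by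
            rw [← pow_add, hexp]
          rw [mul_assoc (C^(j+1) * (2*C)^(ℓ+1+j)), hkk,
            show ℓ + (j+1) = ℓ+1+j from by omega]
          ring
        calc Nm (u n - u (n+m))
            ≤ C * (Nm (u n - u (n + 2^ℓ)) + Nm (u (n+2^ℓ) - u (n+m))) := key
          _ ≤ C * ((2*C)^ℓ * k^n * d0 + SB * k^(n + 2^ℓ) * d0) :=
              mul_le_mul_of_nonneg_left (add_le_add hA hB) hC0.le
          _ = (C*(2*C)^ℓ + C * (SB * k^(2^ℓ))) * k^n * d0 := by rw [pow_add]; ring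
          _ = _ := by rw [hsum_eq]
  -- summable series
  obtain ⟨a, hadef⟩ : ∃ a : ℕ → ℝ, a = fun j => C^(j+1) * (2*C)^j * k^(2^j - 1) := ⟨_, rfl⟩
  have ha_pos : ∀ j, 0 < a j := by intro j; simp only [hadef]; positivity
  have hratio : ∀ j, a (j+1) = a j * (2*C^2*k^(2^j)) := by
    intro j
    simp only [hadef]
    have h1j : 1 ≤ (2:ℕ)^j := Nat.one_le_two_pow
    have hexp : 2^(j+1) - 1 = (2^j - 1) + 2^j := by
      have hp : (2:ℕ)^(j+1) = 2 * 2^j := by ring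
      omega
    rw [hexp, pow_add]
    ring
  have hsummable : Summable a := by
    apply summable_of_ratio_norm_eventually_le (r := 1/2) (by norm_num)
    have htend : Filter.Tendsto (fun j : ℕ => 2*C^2 * k^j) Filter.atTop (nhds 0) := by
      have h := tendsto_pow_atTop_nhds_zero_of_lt_one hk0.le hk1
      have := h.const_mul (2*C^2)
      simpa using this
    have hev : ∀ᶠ j : ℕ in Filter.atTop, 2*C^2*k^j < 1/2 :=
      htend.eventually_lt_const (by norm_num)
    filter_upwards [hev] with j hj
    rw [Real.norm_eq_abs, Real.norm_eq_abs, abs_of_pos (ha_pos _), abs_of_pos (ha_pos _),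
      hratio]
    have h8 : k^(2^j) ≤ k^j :=
      pow_le_pow_of_le_one hk0.le hk1.le (Nat.le_of_lt (Nat.lt_two_pow_self (n := j)))
    have h9 : 2*C^2*k^(2^j) ≤ 2*C^2*k^j := by nlinarith
    nlinarith [(ha_pos j).le]
  obtain ⟨M, hMdef⟩ : ∃ M : ℝ, M = ∑' j, a j := ⟨_, rfl⟩
  have hpartial : ∀ t, (∑ j ∈ Finset.range t, a j) ≤ M := by
    intro t
    rw [hMdef]
    exact Summable.sum_le_tsum (Finset.range t) (fun j _ => (ha_pos j).le) hsummable
  have hM0 : 0 ≤ M := by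
    rw [hMdef]; exact tsum_nonneg fun j => (ha_pos j).le
  -- uniform bound
  have hbound : ∀ n m, Nm (u n - u (n + m)) ≤ M * k^n * d0 := by
    intro n m
    have hm : m + 2^0 ≤ 2^(0 + m + 1) := by
      simpa using Nat.le_of_lt (Nat.lt_two_pow_self (n := m+1))
    have hB := claimB m 0 n m hm
    have hs : (∑ j ∈ Finset.range (m+1), C^(j+1)*(2*C)^(0+j)*k^(2^(0+j)-2^0))
        = ∑ j ∈ Finset.range (m+1), a j := by
      apply Finset.sum_congr rfl
      intro j _
      simp [hadef]
    rw [hs] at hB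
    have hp := hpartial (m+1)
    have hkn : (0:ℝ) ≤ k ^ n := by positivity
    linarith [mul_le_mul_of_nonneg_right (mul_le_mul_of_nonneg_right hp hkn) hd00, hB]
  -- Cauchy
  have hcauchy : ∀ ε > 0, ∃ N : ℕ, ∀ p ≥ N, ∀ q ≥ N, Nm (u p - u q) < ε := by
    intro ε hε
    have htend : Filter.Tendsto (fun n : ℕ => M * k^n * d0) Filter.atTop (nhds 0) := by
      have h := tendsto_pow_atTop_nhds_zero_of_lt_one hk0.le hk1
      have h' := (h.const_mul M).mul_const d0
      simpa using h'
    have hev : ∀ᶠ n : ℕ in Filter.atTop, M * k^n * d0 < ε := htend.eventually_lt_const hε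
    obtain ⟨N, hN⟩ := Filter.eventually_atTop.mp hev
    refine ⟨N, ?_⟩
    have main : ∀ p q, N ≤ p → p ≤ q → Nm (u p - u q) < ε := by
      intro p q hp hpq
      obtain ⟨m, rfl⟩ := Nat.exists_eq_add_of_le hpq
      have hbd := hbound p m
      have hkp : k^p ≤ k^N := pow_le_pow_of_le_one hk0.le hk1.le hp
      have hNb := hN N le_rfl
      calc Nm (u p - u (p+m)) ≤ M*k^p*d0 := hbd
        _ ≤ M*k^N*d0 := by
            linarith [mul_le_mul_of_nonneg_right (mul_le_mul_of_nonneg_left hkp hM0) hd00]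
        _ < ε := hNb
    intro p hp q hq
    rcases le_total p q with hle | hle
    · exact main p q hp hle
    · rw [hsymm]; exact main q p hq hle
  obtain ⟨l, hl⟩ := hcomplete u hcauchy
  have hSl : S l = l := by
    have hbd : ∀ n, Nm (l - S l) ≤ C * (Nm (u (n+1) - l) + k * Nm (u n - l)) := by
      intro n
      have key := h2' l (u (n+1)) (S l)
      have hc : Nm (u (n+1) - S l) ≤ k * Nm (u n - l) := by
        rw [hu_succ n]; exact hcontr _ _
      have hs : Nm (l - u (n+1)) = Nm (u (n+1) - l) := hsymm _ _
      rw [hs] at key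
      have := mul_le_mul_of_nonneg_left (add_le_add_left hc (Nm (u (n+1) - l))) hC0.le
      linarith
    have htend2 : Filter.Tendsto (fun n => C * (Nm (u (n+1) - l) + k * Nm (u n - l)))
        Filter.atTop (nhds 0) := by
      have h1' : Filter.Tendsto (fun n => Nm (u (n+1) - l)) Filter.atTop (nhds 0) := by
        have := hl.comp (Filter.tendsto_add_atTop_nat 1)
        exact this
      have h2'' := hl.const_mul k
      have := (h1'.add h2'').const_mul C
      simpa using this
    have hle : Nm (l - S l) ≤ 0 := ge_of_tendsto' htend2 hbd
    have hz : Nm (l - S l) = 0 := le_antisymm hle (hnn _)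
    have := sub_eq_zero.mp ((h0 _).mp hz)
    exact this.symm
  refine ⟨l, (hfix l).mp hSl, ?_⟩
  intro y hy
  have hSy : S y = y := (hfix y).mpr hy
  have hc := hcontr y l
  rw [hSy, hSl] at hc
  have hn := hnn (y - l)
  have hNle : Nm (y - l) ≤ 0 := by nlinarith [hc, hn, hk1]
  have hz : Nm (y - l) = 0 := le_antisymm hNle hn
  exact sub_eq_zero.mp ((h0 _).mp hz)
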